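/- For w ∈ S_n, the following are equivalent: (1) w is an inverse fireworks permutation; (2) the rightmost cells of the nonempty rows of RD(w) lie in pairwise distinct columns. -/

import Mathlib

open scoped Classical

noncomputable section

/-- A weak composition: a finitely supported sequence of naturals.  Indices are
thought of as positive integers; index `0` is required to satisfy `α 0 = 0`. -/
abbrev WeakComp := ℕ →₀ ℕ

/-- A weak composition is snowy if its positive entries are pairwise distinct. -/
def Snowy (α : WeakComp) : Prop :=
  ∀ r r', 0 < α r → α r = α r' → r = r'

/-- The key diagram of a weak composition: the left-justified diagram with
`α r` cells in row `r` (columns `1, …, α r`). -/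
def keyDiagram (α : WeakComp) : Finset (ℕ × ℕ) :=
  α.support.biUnion fun r => (Finset.Icc 1 (α r)).image fun c => (r, c)

/-- Largest row index occurring in a diagram. -/
def rowBound (D : Finset (ℕ × ℕ)) : ℕ := (D.image Prod.fst).sup id

/-- One step of the snow-diagram algorithm: in row `r`, mark as a dark cloud the
rightmost cell of `D` whose column contains no dark cloud of `S` yet. -/
def darkStep (D S : Finset (ℕ × ℕ)) (r : ℕ) : Finset (ℕ × ℕ) :=
  let cols := (D.filter fun p => p.1 = r ∧ ∀ q ∈ S, q.2 ≠ p.2).image Prod.snd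
  if h : cols.Nonempty then insert (r, cols.max' h) S else S

/-- Process rows `N, N-1, …, N-k+1` from bottom to top. -/
def darkAux (D : Finset (ℕ × ℕ)) (N : ℕ) : ℕ → Finset (ℕ × ℕ)
  | 0 => ∅
  | k + 1 => darkStep D (darkAux D N k) (N - k)

/-- The dark cloud diagram of a diagram `D`: iterate the rows of `D` from bottom
to top, marking in each row the rightmost cell whose column contains no dark
cloud from a lower row. -/
def dark (D : Finset (ℕ × ℕ)) : Finset (ℕ × ℕ) := darkAux D (rowBound D) (rowBound D)

/-- The underlying diagram of the snow diagram of `D`: the cells of `D` together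
with all (snowflake) positions above a dark cloud in its column. -/
def snow (D : Finset (ℕ × ℕ)) : Finset (ℕ × ℕ) :=
  D ∪ (dark D).biUnion fun p => (Finset.Icc 1 p.1).image fun r => (r, p.2)

/-- `rajcode` of a diagram: the number of cells in row `r` of its snow diagram. -/
def rajcodeD (D : Finset (ℕ × ℕ)) (r : ℕ) : ℕ :=
  ((snow D).filter fun p => p.1 = r).card

/-- `raj` of a diagram: the total number of cells of its snow diagram. -/
def rajD (D : Finset (ℕ × ℕ)) : ℕ := (snow D).card

/-- `rajcode` of a weak composition. -/
def rajcode (α : WeakComp) (r : ℕ) : ℕ := rajcodeD (keyDiagram α) r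

/-- `raj` of a weak composition. -/
def raj (α : WeakComp) : ℕ := rajD (keyDiagram α)

/-- Non-attacking rook diagram: a finite subset of `ℤ_{>0} × ℤ_{>0}` with at
most one cell in each row and at most one cell in each column. -/
def IsRook (R : Finset (ℕ × ℕ)) : Prop :=
  (∀ p ∈ R, 1 ≤ p.1 ∧ 1 ≤ p.2) ∧
    ∀ p ∈ R, ∀ q ∈ R, (p.1 = q.1 ∨ p.2 = q.2) → p = q

/-- The sum `|α|` of the entries of a weak composition. -/
def wsum (α : WeakComp) : ℕ := α.sum fun _ v => v

/-- The number of pairs `(r, r')` with `1 ≤ r < r'` and `α r < α r'`. -/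
def invCount (α : WeakComp) : ℕ :=
  ((Finset.Icc 1 (α.support.sup id) ×ˢ α.support).filter fun p =>
      p.1 < p.2 ∧ α p.1 < α p.2).card

/-- Swap entries `i` and `i+1` of a weak composition. -/
def swapEntries (i : ℕ) (α : WeakComp) : WeakComp :=
  Finsupp.equivMapDomain (Equiv.swap i (i + 1)) α

/-- The Rothe diagram of `w ∈ S_n`, in 1-based coordinates:
`{(r, w(r')) : r < r', w(r) > w(r')}`. -/
def rothe {n : ℕ} (w : Equiv.Perm (Fin n)) : Finset (ℕ × ℕ) :=
  (Finset.univ.filter fun p : Fin n × Fin n => p.1 < p.2 ∧ w p.2 < w p.1).image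
    fun p => ((p.1 : ℕ) + 1, (w p.2 : ℕ) + 1)

/-- Length of the longest increasing subsequence of `w` starting at position `r`
(equivalently, starting with the value `w r`). -/
def LISfrom {n : ℕ} (w : Equiv.Perm (Fin n)) (r : Fin n) : ℕ :=
  Finset.sup (Finset.univ.filter fun s : Finset (Fin n) =>
      r ∈ s ∧ (∀ i ∈ s, r ≤ i) ∧ ∀ i ∈ s, ∀ j ∈ s, i < j → w i < w j)
    Finset.card

/-- Insert `x` into a strictly decreasing row: replace the largest entry `< x`
(returning it as bumped), or append `x` at the end. -/
def insertRow : List ℕ → ℕ → List ℕ × Option ℕ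
  | [], x => ([x], none)
  | a :: t, x =>
      if a < x then (x :: t, some a)
      else (a :: (insertRow t x).1, (insertRow t x).2)

/-- The 1-based value of `w` at 0-based position `i` (0 if out of range). -/
def oneline {n : ℕ} (w : Equiv.Perm (Fin n)) (i : ℕ) : ℕ :=
  if h : i < n then (w ⟨i, h⟩ : ℕ) + 1 else 0

/-- Row one of the Schensted insertion tableau after the first `k` insertions of
the values `w(n), w(n-1), …` (1-based values, inserted from the last position). -/
def rowOneAux {n : ℕ} (w : Equiv.Perm (Fin n)) : ℕ → List ℕ
  | 0 => []
  | k + 1 => (insertRow (rowOneAux w k) (oneline w (n - 1 - k))).1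

/-- The value bumped from row one when the value `w r` is inserted (during the
Schensted insertion of `w(n), …, w(1)` into the empty tableau); `none` if `w r`
is appended at the end of row one. -/
def bumpedFromRowOne {n : ℕ} (w : Equiv.Perm (Fin n)) (r : Fin n) : Option ℕ :=
  (insertRow (rowOneAux w (n - 1 - (r : ℕ))) (oneline w (r : ℕ))).2

/-- Position `i` starts a maximal decreasing run of `u` (in one-line notation). -/
def IsRunStart {n : ℕ} (u : Equiv.Perm (Fin n)) (i : Fin n) : Prop :=
  ∀ j : Fin n, (j : ℕ) + 1 = (i : ℕ) → u j < u i

/-- A fireworks permutation: the initial elements of its maximal decreasing runs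
are increasing. -/
def Fireworks {n : ℕ} (u : Equiv.Perm (Fin n)) : Prop :=
  ∀ i j : Fin n, IsRunStart u i → IsRunStart u j → i < j → u i < u j

/-- An inverse fireworks permutation. -/
def InverseFireworks {n : ℕ} (w : Equiv.Perm (Fin n)) : Prop := Fireworks w⁻¹

/-- The `n`-th Bell number: the number of set partitions (equivalence relations)
of an `n`-element set. -/
def bell (n : ℕ) : ℕ := Nat.card (Setoid (Fin n))

/-- The staircase board `Stair_n = {(r,c) : 1 ≤ r ≤ n-1, 1 ≤ c ≤ n-r}`. -/
def stair (n : ℕ) : Finset (ℕ × ℕ) :=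
  (Finset.Icc 1 n ×ˢ Finset.Icc 1 n).filter fun p => p.1 ≤ n - 1 ∧ p.2 ≤ n - p.1

/-- All cells weakly above a rook of `R` in its column, or weakly to the left of
a rook of `R` in its row. -/
def hooks (R : Finset (ℕ × ℕ)) : Finset (ℕ × ℕ) :=
  R.biUnion fun p =>
    ((Finset.Icc 1 p.1).image fun r => (r, p.2)) ∪
      ((Finset.Icc 1 p.2).image fun c => (p.1, c))

/-- The Northwest number `NW(R)`. -/
def NW (R : Finset (ℕ × ℕ)) : ℕ := (hooks R).card

/-- The Garsia–Remmel statistic: the number of cells of `Stair_n` that are not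
weakly above a rook in its column and not weakly to the left of a rook in its
row. -/
def GRcount (n : ℕ) (R : Finset (ℕ × ℕ)) : ℕ :=
  ((stair n).filter fun q =>
      ¬ ∃ p ∈ R, (p.2 = q.2 ∧ q.1 ≤ p.1) ∨ (p.1 = q.1 ∧ q.2 ≤ p.2)).card

/-- Garsia–Remmel `q`-Stirling numbers of the second kind. -/
def qStirling : ℕ → ℕ → Polynomial ℤ
  | 0, 0 => 1
  | 0, _ + 1 => 0
  | _ + 1, 0 => 0
  | n + 1, k + 1 =>
      Polynomial.X ^ k * qStirling n k +
        (∑ i ∈ Finset.range (k + 1), Polynomial.X ^ i) * qStirling n (k + 1)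

/-- The `q`-Bell polynomial `B_n(q) = Σ_{k=0}^n S_{n,k}(q)`. -/
def qBell (n : ℕ) : Polynomial ℤ := ∑ k ∈ Finset.range (n + 1), qStirling n k

/-- Tail lexicographic order on exponent vectors: `γ < α` iff there is `k` with
`γ k < α k` and `γ j = α j` for all `j > k`. -/
def TailLt (γ α : ℕ →₀ ℕ) : Prop :=
  ∃ k, γ k < α k ∧ ∀ j, k < j → γ j = α j


/-- Membership in the Rothe diagram, unpacked. -/
lemma mem_rothe_iff {n : ℕ} (w : Equiv.Perm (Fin n)) (r c : ℕ) :
    (r, c) ∈ rothe w ↔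
      ∃ i j : Fin n, i < j ∧ w j < w i ∧ r = (i : ℕ) + 1 ∧ c = (w j : ℕ) + 1 := by
  simp only [rothe, Finset.mem_image, Finset.mem_filter, Finset.mem_univ, true_and,
    Prod.exists, Prod.mk.injEq]
  constructor
  · rintro ⟨i, j, ⟨hij, hw⟩, hr, hc⟩
    exact ⟨i, j, hij, hw, hr.symm, hc.symm⟩
  · rintro ⟨i, j, hij, hw, hr, hc⟩
    exact ⟨i, j, ⟨hij, hw⟩, hr.symm, hc.symm⟩

/-- Every position lies weakly after a run start whose value is at least as large. -/
lemma exists_runStart {n : ℕ} (u : Equiv.Perm (Fin n)) (z : Fin n) :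
    ∃ s : Fin n, s ≤ z ∧ IsRunStart u s ∧ u z ≤ u s := by
  obtain ⟨m, hm⟩ : ∃ m, (z : ℕ) ≤ m := ⟨z, le_refl _⟩
  induction m generalizing z with
  | zero =>
    refine ⟨z, le_refl _, fun j hj => ?_, le_refl _⟩
    exact absurd hj (by omega)
  | succ m ih =>
    by_cases h : IsRunStart u z
    · exact ⟨z, le_refl _, h, le_refl _⟩
    · simp only [IsRunStart, not_forall] at h
      obtain ⟨j, hj1, hj2⟩ := h
      obtain ⟨s, hs1, hs2, hs3⟩ := ih j (by omega)
      refine ⟨s, ?_, hs2, le_trans (le_of_not_gt hj2) hs3⟩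
      rw [Fin.le_def] at hs1 ⊢
      omega

/-- Key step for the forward direction: two distinct rows with the same
rightmost column contradict the fireworks property of `w⁻¹`. -/
lemma aux_fwd {n : ℕ} (w : Equiv.Perm (Fin n)) (i i' p v : Fin n)
    (hip : i < p) (hi'p : i' < p) (hv : w p = v) (hvi : v < w i) (hvi' : v < w i')
    (hmax : ∀ j : Fin n, i < j → w j < w i → w j ≤ v)
    (hmax' : ∀ j : Fin n, i' < j → w j < w i' → w j ≤ v)
    (hii' : i < i') (hfw : Fireworks w⁻¹) : False := by
  have hab : w i < w i' := by
    rcases lt_trichotomy (w i) (w i') with h | h | h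
    · exact h
    · exact absurd (w.injective h) (ne_of_lt hii')
    · exact absurd (hmax i' hii' h) (not_le.mpr hvi')
  have hub : w⁻¹ (w i') = i' := w.symm_apply_apply i'
  have hbstart : IsRunStart w⁻¹ (w i') := by
    intro j hj
    have hjv : v < j := by
      rw [Fin.lt_def] at hvi hab ⊢
      omega
    have hjb : j < w i' := by rw [Fin.lt_def]; omega
    rw [hub]
    have hwj : w (w⁻¹ j) = j := w.apply_symm_apply j
    rcases lt_trichotomy (w⁻¹ j) i' with h | h | h
    · exact h
    · have hje : j = w i' := by rw [← hwj, h]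
      exact absurd hje (ne_of_lt hjb)
    · have hle := hmax' (w⁻¹ j) h (by rw [hwj]; exact hjb)
      rw [hwj] at hle
      exact absurd hle (not_le.mpr hjv)
  obtain ⟨s, hsv, hss, hus⟩ := exists_runStart w⁻¹ v
  have hsb : s < w i' := lt_of_le_of_lt hsv (lt_trans hvi hab)
  have huv : w⁻¹ v = p := by rw [← hv]; exact w.symm_apply_apply p
  have hlt := hfw s (w i') hss hbstart hsb
  rw [hub] at hlt
  rw [huv] at hus
  exact absurd (lt_trans (lt_of_le_of_lt hus hlt) hi'p) (lt_irrefl p)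

/-- `w` is inverse fireworks iff the rightmost cells of the
nonempty rows of `RD(w)` lie in pairwise distinct columns. -/
theorem inverseFireworks_iff_rightmost_distinct (n : ℕ) (w : Equiv.Perm (Fin n)) :
    InverseFireworks w ↔
      ∀ r r' c c' : ℕ,
        ((r, c) ∈ rothe w ∧ ∀ c₂, (r, c₂) ∈ rothe w → c₂ ≤ c) →
        ((r', c') ∈ rothe w ∧ ∀ c₂, (r', c₂) ∈ rothe w → c₂ ≤ c') →
        c = c' → r = r' := by
  constructor
  · -- inverse fireworks ⇒ rightmost cells in distinct columns
    intro hfw r r' c c' h1 h2 hcc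
    by_contra hne
    obtain ⟨cell1, max1⟩ := h1
    obtain ⟨cell2, max2⟩ := h2
    rw [mem_rothe_iff] at cell1 cell2
    obtain ⟨i, p, hip, hwp, hr, hc⟩ := cell1
    obtain ⟨i', p', hip', hwp', hr', hc'⟩ := cell2
    subst hr hr' hc hc'
    have hpp : p' = p := w.injective (Fin.ext (by omega))
    rw [hpp] at hip' hwp' 
    have hmaxF : ∀ j : Fin n, i < j → w j < w i → w j ≤ w p := by
      intro j hj hji
      have hmem : ((i : ℕ) + 1, (w j : ℕ) + 1) ∈ rothe w :=
        (mem_rothe_iff w _ _).mpr ⟨i, j, hj, hji, rfl, rfl⟩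
      have := max1 _ hmem
      rw [Fin.le_def]; omega
    have hmaxF' : ∀ j : Fin n, i' < j → w j < w i' → w j ≤ w p := by
      intro j hj hji
      have hmem : ((i' : ℕ) + 1, (w j : ℕ) + 1) ∈ rothe w :=
        (mem_rothe_iff w _ _).mpr ⟨i', j, hj, hji, rfl, rfl⟩
      have := max2 _ hmem
      rw [Fin.le_def]; omega
    have hii : i ≠ i' := fun h => hne (by rw [h])
    rcases hii.lt_or_gt with h | h
    · exact aux_fwd w i i' p (w p) hip hip' rfl hwp hwp' hmaxF hmaxF' h hfw
    · exact aux_fwd w i' i p (w p) hip' hip rfl hwp' hwp hmaxF' hmaxF h hfw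
  · -- distinct columns ⇒ inverse fireworks
    intro hrhs
    intro x y hx hy hxy
    by_contra hlt
    have huyx : w⁻¹ y < w⁻¹ x :=
      lt_of_le_of_ne (le_of_not_gt hlt)
        (fun h => (ne_of_lt hxy) ((w⁻¹).injective h.symm))
    classical
    set S : Finset (Fin n) :=
      Finset.univ.filter (fun z : Fin n => x ≤ z ∧ z < y ∧ w⁻¹ y < w⁻¹ z) with hSdef
    have hxS : x ∈ S := by
      simp only [hSdef, Finset.mem_filter, Finset.mem_univ, true_and]
      exact ⟨le_refl _, hxy, huyx⟩
    have hS : S.Nonempty := ⟨x, hxS⟩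
    obtain ⟨v, hvmem, hvmax⟩ := S.exists_max_image id hS
    simp only [hSdef, Finset.mem_filter, Finset.mem_univ, true_and] at hvmem
    obtain ⟨hxv, hvy, huyv⟩ := hvmem
    have hmaxv : ∀ z : Fin n, x ≤ z → z < y → w⁻¹ y < w⁻¹ z → z ≤ v := by
      intro z h1 h2 h3
      have hz : z ∈ S := by
        simp only [hSdef, Finset.mem_filter, Finset.mem_univ, true_and]
        exact ⟨h1, h2, h3⟩
      exact hvmax z hz
    have hv1y : (v : ℕ) + 1 < (y : ℕ) := by
      rcases Nat.lt_or_ge ((v : ℕ) + 1) (y : ℕ) with h | h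
      · exact h
      · have heq : (v : ℕ) + 1 = (y : ℕ) := by
          rw [Fin.lt_def] at hvy; omega
        exact absurd (hy v heq) (not_lt.mpr (le_of_lt huyv))
    have hv1n : (v : ℕ) + 1 < n := lt_trans hv1y y.isLt
    set v1 : Fin n := ⟨(v : ℕ) + 1, hv1n⟩ with hv1def
    have hvv1 : v < v1 := by
      have : (v : ℕ) < (v : ℕ) + 1 := Nat.lt_succ_self _
      exact this
    have huv1 : w⁻¹ v1 < w⁻¹ y := by
      rcases lt_trichotomy (w⁻¹ v1) (w⁻¹ y) with h | h | h
      · exact h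
      · have hyv : (v : ℕ) + 1 = (y : ℕ) := congrArg Fin.val ((w⁻¹).injective h)
        exact absurd (hy v hyv) (not_lt.mpr (le_of_lt huyv))
      · have hv1lty : v1 < y := by
          have : (v : ℕ) + 1 < (y : ℕ) := hv1y
          exact this
        have := hmaxv v1 (le_of_lt (lt_of_le_of_lt hxv hvv1)) hv1lty h
        exact absurd hvv1 (not_lt.mpr this)
    have hwy : w (w⁻¹ y) = y := w.apply_symm_apply y
    have hwv : w (w⁻¹ v) = v := w.apply_symm_apply v
    have hwv1 : w (w⁻¹ v1) = v1 := w.apply_symm_apply v1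
    have cell1 : ((w⁻¹ y : ℕ) + 1, (v : ℕ) + 1) ∈ rothe w := by
      rw [mem_rothe_iff]
      exact ⟨w⁻¹ y, w⁻¹ v, huyv, by rw [hwy, hwv]; exact hvy, rfl, by rw [hwv]⟩
    have max1 : ∀ c₂, ((w⁻¹ y : ℕ) + 1, c₂) ∈ rothe w → c₂ ≤ (v : ℕ) + 1 := by
      intro c₂ hc₂
      rw [mem_rothe_iff] at hc₂
      obtain ⟨a, j, haj, hja, ha, hcj⟩ := hc₂
      have haeq : a = w⁻¹ y := Fin.ext (by omega)
      subst haeq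
      rw [hwy] at hja
      by_contra hgt
      have h1 : v < w j := by rw [Fin.lt_def]; omega
      have h3 : w⁻¹ (w j) = j := w.symm_apply_apply j
      have := hmaxv (w j) (le_of_lt (lt_of_le_of_lt hxv h1)) hja (by rw [h3]; exact haj)
      exact absurd h1 (not_lt.mpr this)
    have huvv1 : w⁻¹ v1 < w⁻¹ v := lt_trans huv1 huyv
    have cell2 : ((w⁻¹ v1 : ℕ) + 1, (v : ℕ) + 1) ∈ rothe w := by
      rw [mem_rothe_iff]
      exact ⟨w⁻¹ v1, w⁻¹ v, huvv1, by rw [hwv, hwv1]; exact hvv1, rfl, by rw [hwv]⟩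
    have max2 : ∀ c₂, ((w⁻¹ v1 : ℕ) + 1, c₂) ∈ rothe w → c₂ ≤ (v : ℕ) + 1 := by
      intro c₂ hc₂
      rw [mem_rothe_iff] at hc₂
      obtain ⟨a, j, haj, hja, ha, hcj⟩ := hc₂
      have haeq : a = w⁻¹ v1 := Fin.ext (by omega)
      subst haeq
      rw [hwv1] at hja
      have hja' : (w j : ℕ) < (v : ℕ) + 1 := hja
      omega
    have hre := hrhs _ _ _ _ ⟨cell1, max1⟩ ⟨cell2, max2⟩ rfl
    have heq : w⁻¹ y = w⁻¹ v1 := Fin.ext (by omega)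
    have hyv1 : y = v1 := (w⁻¹).injective heq
    have : (y : ℕ) = (v : ℕ) + 1 := congrArg Fin.val hyv1
    omega

end
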